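/- arXiv:2310.01270 — 2 statements merged into one kernel-verified Lean document; each statement's English description precedes it below -/
import Mathlib

section
/- Let n ≥ 1, let v be a Cayley permutation of length n, and let m ≥ 0. Then the number of weakly increasing maps u : {1,…,n} → {1,…,m} with Des(u) ⊆ Des(v) equals the binomial coefficient C(n + m − asc∘(v) − 1, n), and the number of weakly increasing maps u : {1,…,n} → {1,…,m} with Des(u) ⊆ Des∘(v) equals C(n + m − asc(v) − 1, n). -/
namespace CayPaper

/-- A word of length `n` (1-indexed): it vanishes outside `{1,…,n}`. -/
def IsWord (n : ℕ) (v : ℕ → ℕ) : Prop := ∀ i, i ∉ Set.Icc 1 n → v i = 0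

/-- A Cayley permutation of length `n`: a word on `{1,…,n}` whose image is `{1,…,k}`
for some `k ≤ n`. -/
def IsCayley (n : ℕ) (v : ℕ → ℕ) : Prop :=
  IsWord n v ∧ ∃ k, v '' Set.Icc 1 n = Set.Icc 1 k

/-- A weakly increasing Cayley permutation of length `n`. -/
def IsWI (n : ℕ) (v : ℕ → ℕ) : Prop :=
  IsCayley n v ∧ MonotoneOn v (Set.Icc 1 n)

/-- A permutation of `{1,…,n}`, encoded as a word. -/
def IsPermWord (n : ℕ) (v : ℕ → ℕ) : Prop :=
  IsWord n v ∧ Set.BijOn v (Set.Icc 1 n) (Set.Icc 1 n)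

/-- The weak descent set `Des(v) = { i ∈ {1,…,n−1} : v(i) ≥ v(i+1) }`. -/
def desSet (n : ℕ) (v : ℕ → ℕ) : Finset ℕ :=
  (Finset.Icc 1 (n - 1)).filter fun i => v (i + 1) ≤ v i

/-- The strict descent set `Des∘(v) = { i : v(i) > v(i+1) }`. -/
def sdesSet (n : ℕ) (v : ℕ → ℕ) : Finset ℕ :=
  (Finset.Icc 1 (n - 1)).filter fun i => v (i + 1) < v i

/-- The weak ascent set `Asc(v) = { i : v(i) ≤ v(i+1) }`. -/
def ascSet (n : ℕ) (v : ℕ → ℕ) : Finset ℕ :=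
  (Finset.Icc 1 (n - 1)).filter fun i => v i ≤ v (i + 1)

/-- The strict ascent set `Asc∘(v) = { i : v(i) < v(i+1) }`. -/
def sascSet (n : ℕ) (v : ℕ → ℕ) : Finset ℕ :=
  (Finset.Icc 1 (n - 1)).filter fun i => v i < v (i + 1)

def des (n : ℕ) (v : ℕ → ℕ) : ℕ := (desSet n v).card
def sdes (n : ℕ) (v : ℕ → ℕ) : ℕ := (sdesSet n v).card
def asc (n : ℕ) (v : ℕ → ℕ) : ℕ := (ascSet n v).card
def sasc (n : ℕ) (v : ℕ → ℕ) : ℕ := (sascSet n v).card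

/-- The maximum value of a word. -/
def wmax (n : ℕ) (v : ℕ → ℕ) : ℕ := (Finset.Icc 1 n).sup v

/-- Reverse: `v^r(i) = v(n+1−i)`. -/
def wrev (n : ℕ) (v : ℕ → ℕ) : ℕ → ℕ := fun i =>
  if 1 ≤ i ∧ i ≤ n then v (n + 1 - i) else 0

/-- Complement: `v^c(i) = max(v)+1−v(i)`. -/
def wcomp (n : ℕ) (v : ℕ → ℕ) : ℕ → ℕ := fun i =>
  if 1 ≤ i ∧ i ≤ n then wmax n v + 1 - v i else 0

/-- The word `(σ(1), …, σ(n))` (1-indexed) of a permutation `σ` of `Fin n`. -/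
def permWord (n : ℕ) (σ : Equiv.Perm (Fin n)) : ℕ → ℕ := fun i =>
  if h : 1 ≤ i ∧ i ≤ n then ((σ ⟨i - 1, by omega⟩ : Fin n) : ℕ) + 1 else 0

/-- The conjugate of `u`: the unique weakly increasing Cayley permutation of
length `n` whose descent set is `{1,…,n−1} \ Des(u)`. -/
noncomputable def conjWI (n : ℕ) (u : ℕ → ℕ) : ℕ → ℕ :=
  haveI := Classical.dec (∃ w, IsWI n w ∧ desSet n w = Finset.Icc 1 (n - 1) \ desSet n u)
  if h : ∃ w, IsWI n w ∧ desSet n w = Finset.Icc 1 (n - 1) \ desSet n u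
    then h.choose else fun _ => 0

/-- A Burge matrix: every row and every column contains a nonzero entry. -/
def IsBurge {p q : ℕ} (M : Matrix (Fin p) (Fin q) ℕ) : Prop :=
  (∀ i, ∃ j, M i j ≠ 0) ∧ (∀ j, ∃ i, M i j ≠ 0)

/-- The size of a matrix with natural entries: the sum of its entries. -/
def matSize {p q : ℕ} (M : Matrix (Fin p) (Fin q) ℕ) : ℕ := ∑ i, ∑ j, M i j

/-- Burge matrices of size `n` (of all dimensions). -/
def BurgeMatrices (n : ℕ) : Set (Σ p : ℕ, Σ q : ℕ, Matrix (Fin p) (Fin q) ℕ) :=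
  {M | IsBurge M.2.2 ∧ matSize M.2.2 = n}

/-- Binary Burge matrices of size `n`. -/
def BinaryBurgeMatrices (n : ℕ) : Set (Σ p : ℕ, Σ q : ℕ, Matrix (Fin p) (Fin q) ℕ) :=
  {M | M ∈ BurgeMatrices n ∧ ∀ i j, M.2.2 i j ≤ 1}

/-- Burge matrices of size `n` whose every column sums to `1`. -/
def ColSumOneBurgeMatrices (n : ℕ) : Set (Σ p : ℕ, Σ q : ℕ, Matrix (Fin p) (Fin q) ℕ) :=
  {M | M ∈ BurgeMatrices n ∧ ∀ j, ∑ i, M.2.2 i j = 1}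

/-- Burge words: pairs `(u,v) ∈ WI[n] × Cay[n]` with `Des(u) ⊆ Des(v)`. -/
def BurPairs (n : ℕ) : Set ((ℕ → ℕ) × (ℕ → ℕ)) :=
  {p | IsWI n p.1 ∧ IsCayley n p.2 ∧ desSet n p.1 ⊆ desSet n p.2}

/-- Pairs `(u,v) ∈ WI[n] × Cay[n]` with `Des(u) ⊆ Des∘(v)`. -/
def BBurPairs (n : ℕ) : Set ((ℕ → ℕ) × (ℕ → ℕ)) :=
  {p | IsWI n p.1 ∧ IsCayley n p.2 ∧ desSet n p.1 ⊆ sdesSet n p.2}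

/-- Pairs `(u,v) ∈ WI[n] × S_n` with `Des(u) ⊆ Des(v)`. -/
def PBurPairs (n : ℕ) : Set ((ℕ → ℕ) × (ℕ → ℕ)) :=
  {p | IsWI n p.1 ∧ IsPermWord n p.2 ∧ desSet n p.1 ⊆ desSet n p.2}

/-- `Ω[n]`: pairs `(u,v) ∈ WI[n] × Cay[n]` with `Des(u) ⊇ Des(v)`. -/
def OmegaPairs (n : ℕ) : Set ((ℕ → ℕ) × (ℕ → ℕ)) :=
  {p | IsWI n p.1 ∧ IsCayley n p.2 ∧ desSet n p.2 ⊆ desSet n p.1}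

/-- `v` lists the positions `1,…,n` in the order obtained by sorting the columns
`(x_i, i)` so that first components are weakly increasing, ties broken by strictly
decreasing second components.  For a permutation word `v` this says exactly that
`v = Γ(id, x)`, the bottom row of the Burge transpose of `(id, x)`. -/
def sortsColumns (n : ℕ) (x v : ℕ → ℕ) : Prop :=
  ∀ i ∈ Finset.Icc 1 (n - 1),
    x (v i) < x (v (i + 1)) ∨ (x (v i) = x (v (i + 1)) ∧ v (i + 1) < v i)

/-- The Fishburn basis of a permutation word `v`:
`basis(v) = { x ∈ Cay[n] : Γ(id, x) = v }`. -/
def fishburnBasis (n : ℕ) (v : ℕ → ℕ) : Set (ℕ → ℕ) :=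
  {x | IsCayley n x ∧ sortsColumns n x v}

/-- Stanley's `v`-compatibility condition:
`x(v(1)) ≤ ⋯ ≤ x(v(n))` with strict inequality at every ascent of `v`. -/
def VCompatible (n : ℕ) (v x : ℕ → ℕ) : Prop :=
  (∀ i ∈ Finset.Icc 1 (n - 1), x (v i) ≤ x (v (i + 1))) ∧
    ∀ i ∈ Finset.Icc 1 (n - 1), v i < v (i + 1) → x (v i) < x (v (i + 1))

/-- A map `{1,…,n} → {1,…,m}`, encoded as a word. -/
def IsMapTo (n m : ℕ) (x : ℕ → ℕ) : Prop :=
  IsWord n x ∧ ∀ i ∈ Set.Icc 1 n, x i ∈ Set.Icc 1 m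

/-- Weakly increasing maps `{1,…,n} → {1,…,m}`. -/
def WIgen (n m : ℕ) : Set (ℕ → ℕ) :=
  {u | IsMapTo n m u ∧ MonotoneOn u (Set.Icc 1 n)}



section Aux

/-- Chaining consecutive `+1` inequalities. -/
lemma consec_add {n : ℕ} {w : ℕ → ℕ} (h : ∀ i, 1 ≤ i → i + 1 ≤ n → w i + 1 ≤ w (i + 1)) :
    ∀ j i, 1 ≤ i → i ≤ j → j ≤ n → w i + (j - i) ≤ w j := by
  intro j
  induction j with
  | zero => intro i h1 h2 _; omega
  | succ j ih =>
      intro i h1 h2 h3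
      rcases Nat.eq_or_lt_of_le h2 with he | hl
      · subst he; simp
      · have hij : i ≤ j := by omega
        have := ih i h1 hij (by omega)
        have := h j (by omega) h3
        omega

/-- Number of positions in `[1, i)` not in `T`. -/
def dd (T : Finset ℕ) (i : ℕ) : ℕ := ((Finset.Ico 1 i).filter (fun j => j ∉ T)).card

lemma dd_mono (T : Finset ℕ) {i j : ℕ} (h : i ≤ j) : dd T i ≤ dd T j :=
  Finset.card_le_card (Finset.filter_subset_filter _ (Finset.Ico_subset_Ico le_rfl h))

lemma dd_le_add (T : Finset ℕ) {i j : ℕ} (h : i ≤ j) : dd T j ≤ dd T i + (j - i) := by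
  have hsub : Finset.Ico 1 j ⊆ Finset.Ico 1 i ∪ Finset.Ico i j := by
    intro x hx
    simp only [Finset.mem_Ico, Finset.mem_union] at hx ⊢
    omega
  calc dd T j ≤ ((Finset.Ico 1 i ∪ Finset.Ico i j).filter (fun j => j ∉ T)).card :=
        Finset.card_le_card (Finset.filter_subset_filter _ hsub)
    _ ≤ ((Finset.Ico 1 i).filter (fun j => j ∉ T)).card
        + ((Finset.Ico i j).filter (fun j => j ∉ T)).card := by
        rw [Finset.filter_union]; exact Finset.card_union_le _ _
    _ ≤ dd T i + (j - i) := by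
        have := Finset.card_le_card (Finset.filter_subset (fun j => j ∉ T) (Finset.Ico i j))
        simp [Nat.card_Ico] at this
        exact Nat.add_le_add le_rfl this

lemma dd_le (T : Finset ℕ) (i : ℕ) : dd T i ≤ i - 1 := by
  have := Finset.card_le_card (Finset.filter_subset (fun j => j ∉ T) (Finset.Ico 1 i))
  simpa [dd, Nat.card_Ico] using this

lemma dd_succ (T : Finset ℕ) {i : ℕ} (hi : 1 ≤ i) :
    dd T (i + 1) = dd T i + (if i ∈ T then 0 else 1) := by
  have h1 : Finset.Ico 1 (i + 1) = insert i (Finset.Ico 1 i) := by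
    ext x; simp only [Finset.mem_Ico, Finset.mem_insert]; omega
  have h2 : i ∉ Finset.Ico 1 i := by simp
  by_cases hT : i ∈ T
  · simp [dd, h1, Finset.filter_insert, hT]
  · simp [dd, h1, Finset.filter_insert, hT, Finset.card_insert_of_notMem,
      fun h => h2 (Finset.filter_subset _ _ h)]

lemma dd_top {n : ℕ} (hn : 1 ≤ n) {T : Finset ℕ} (hT : T ⊆ Finset.Icc 1 (n - 1)) :
    dd T n + T.card = n - 1 := by
  have hT' : T ⊆ Finset.Ico 1 n := by
    intro x hx; have := hT hx; simp only [Finset.mem_Icc] at this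
    simp only [Finset.mem_Ico]; omega
  have h1 : (Finset.Ico 1 n).filter (fun j => j ∈ T) = T := by
    rw [Finset.filter_mem_eq_inter, Finset.inter_eq_right.mpr hT']
  have h2 := Finset.card_filter_add_card_filter_not (s := Finset.Ico 1 n)
    (p := fun j => j ∈ T)
  rw [h1] at h2
  simp only [dd, Nat.card_Ico] at h2 ⊢
  omega

/-- Key gap estimate for `u` in the counted set. -/
lemma gap_lemma {n : ℕ} {T : Finset ℕ} {u : ℕ → ℕ}
    (hmono : MonotoneOn u (Set.Icc 1 n))
    (hstrict : ∀ i ∈ T, u i < u (i + 1)) :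
    ∀ j i, 1 ≤ i → i ≤ j → j ≤ n → (u i + dd T i) + (j - i) ≤ u j + dd T j := by
  apply consec_add
  intro i h1 h2
  by_cases hiT : i ∈ T
  · have := hstrict i hiT
    have := dd_succ T h1
    simp [hiT] at this
    omega
  · have hmem1 : i ∈ Set.Icc 1 n := by constructor <;> omega
    have hmem2 : i + 1 ∈ Set.Icc 1 n := by constructor <;> omega
    have := hmono hmem1 hmem2 (by omega)
    have := dd_succ T h1
    simp [hiT] at this
    omega

/-- The central counting lemma: weakly increasing maps `{1,…,n} → {1,…,m}` that are
strictly increasing at every position of `T ⊆ {1,…,n−1}` are counted by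
`C(n + m − |T| − 1, n)`. -/
lemma count_lemma (n : ℕ) (hn : 1 ≤ n) (m : ℕ) (T : Finset ℕ)
    (hT : T ⊆ Finset.Icc 1 (n - 1)) :
    Set.ncard {u : ℕ → ℕ | u ∈ WIgen n m ∧ ∀ i ∈ T, u i < u (i + 1)}
      = (n + m - T.card - 1).choose n := by
  set t := T.card with ht
  have htle : t ≤ n - 1 := by
    have := Finset.card_le_card hT
    simpa [Nat.card_Icc] using this
  set M := m + (n - 1 - t) with hM
  set S := {u : ℕ → ℕ | u ∈ WIgen n m ∧ ∀ i ∈ T, u i < u (i + 1)} with hS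
  set f : (ℕ → ℕ) → Finset ℕ := fun u => (Finset.Icc 1 n).image (fun i => u i + dd T i)
    with hf
  have hfacts : ∀ u ∈ S, ∀ j i, 1 ≤ i → i ≤ j → j ≤ n →
      (u i + dd T i) + (j - i) ≤ u j + dd T j := by
    rintro u ⟨⟨⟨_, hmap⟩, hmono⟩, hstrict⟩
    exact gap_lemma hmono hstrict
  have hddtop : dd T n + t = n - 1 := dd_top hn hT
  have hmemP : ∀ u ∈ S, f u ∈ Finset.powersetCard n (Finset.Icc 1 M) := by
    intro u hu
    obtain ⟨⟨⟨_, hmap⟩, _⟩, _⟩ := id hu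
    rw [Finset.mem_powersetCard]
    constructor
    · intro x hx
      simp only [hf, Finset.mem_image, Finset.mem_Icc] at hx
      obtain ⟨i, ⟨hi1, hi2⟩, rfl⟩ := hx
      have hui := hmap i ⟨hi1, hi2⟩
      simp only [Set.mem_Icc] at hui
      have hgap := hfacts u hu n i hi1 hi2 le_rfl
      have hun := hmap n ⟨hn, le_rfl⟩
      simp only [Set.mem_Icc] at hun
      simp only [Finset.mem_Icc]
      omega
    · rw [Finset.card_image_of_injOn, Nat.card_Icc]
      · omega
      · intro a ha b hb hab
        simp only [Finset.coe_Icc, Set.mem_Icc] at ha hb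
        have hab' : u a + dd T a = u b + dd T b := hab
        by_contra hne
        rcases Nat.lt_or_ge a b with h | h
        · have := hfacts u hu b a ha.1 (le_of_lt h) hb.2; omega
        · have hba : b < a := by omega
          have := hfacts u hu a b hb.1 (le_of_lt hba) ha.2; omega
  have hinj : Set.InjOn f S := by
    intro u1 hu1 u2 hu2 heq
    have hcard : (f u1).card = n := (Finset.mem_powersetCard.mp (hmemP u1 hu1)).2
    set s := f u1 with hs
    have hcard2 : (f u2).card = n := (Finset.mem_powersetCard.mp (hmemP u2 hu2)).2
    have F1mono : StrictMono (fun k : Fin n => u1 (k.1 + 1) + dd T (k.1 + 1)) := by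
      intro a b hab
      have hab' : (a : ℕ) < b := hab
      have := hfacts u1 hu1 (b.1 + 1) (a.1 + 1) (by omega) (by omega) (by omega)
      show u1 (a.1 + 1) + dd T (a.1 + 1) < u1 (b.1 + 1) + dd T (b.1 + 1)
      omega
    have F2mono : StrictMono (fun k : Fin n => u2 (k.1 + 1) + dd T (k.1 + 1)) := by
      intro a b hab
      have hab' : (a : ℕ) < b := hab
      have := hfacts u2 hu2 (b.1 + 1) (a.1 + 1) (by omega) (by omega) (by omega)
      show u2 (a.1 + 1) + dd T (a.1 + 1) < u2 (b.1 + 1) + dd T (b.1 + 1)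
      omega
    have hfs1 : ∀ x : Fin n, u1 (x.1 + 1) + dd T (x.1 + 1) ∈ s := by
      intro x
      simp only [hs, hf, Finset.mem_image]
      exact ⟨x.1 + 1, by simp [Finset.mem_Icc], rfl⟩
    have hfs2 : ∀ x : Fin n, u2 (x.1 + 1) + dd T (x.1 + 1) ∈ s := by
      intro x
      rw [heq]
      simp only [hf, Finset.mem_image]
      exact ⟨x.1 + 1, by simp [Finset.mem_Icc], rfl⟩
    have e1 := Finset.orderEmbOfFin_unique hcard hfs1 F1mono
    have e2 := Finset.orderEmbOfFin_unique hcard hfs2 F2mono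
    have hval : ∀ i, 1 ≤ i → i ≤ n → u1 i = u2 i := by
      intro i h1 h2
      have := congrFun (e1.trans e2.symm) ⟨i - 1, by omega⟩
      simp only at this
      have h' : i - 1 + 1 = i := by omega
      rw [h'] at this
      omega
    funext i
    by_cases hi : i ∈ Set.Icc 1 n
    · exact hval i hi.1 hi.2
    · rw [hu1.1.1.1 i hi, hu2.1.1.1 i hi]
  have hsurj : ∀ s ∈ Finset.powersetCard n (Finset.Icc 1 M), ∃ u ∈ S, f u = s := by
    intro s hsmem
    rw [Finset.mem_powersetCard] at hsmem
    obtain ⟨hsub, hcard⟩ := hsmem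
    set e := s.orderEmbOfFin hcard with he
    set E : ℕ → ℕ := fun i => if h : 1 ≤ i ∧ i ≤ n then e ⟨i - 1, by omega⟩ else 0 with hE
    have hEmem : ∀ i, 1 ≤ i → i ≤ n → E i ∈ Finset.Icc 1 M := by
      intro i h1 h2
      have : e ⟨i - 1, by omega⟩ ∈ s := s.orderEmbOfFin_mem hcard _
      have := hsub this
      simpa [hE, h1, h2] using this
    have hEgap : ∀ j i, 1 ≤ i → i ≤ j → j ≤ n → E i + (j - i) ≤ E j := by
      apply consec_add
      intro i h1 h2
      have : e ⟨i - 1, by omega⟩ < e ⟨i + 1 - 1, by omega⟩ := by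
        apply (s.orderEmbOfFin hcard).strictMono
        simp [Fin.lt_def]; omega
      simp only [hE]
      rw [dif_pos ⟨h1, by omega⟩, dif_pos ⟨by omega, h2⟩]
      omega
    have hE1 : ∀ i, 1 ≤ i → i ≤ n → i ≤ E i := by
      intro i h1 h2
      have := hEgap i 1 le_rfl h1 h2
      have := hEmem 1 le_rfl hn
      simp only [Finset.mem_Icc] at this
      omega
    have hEub : ∀ i, 1 ≤ i → i ≤ n → E i ≤ m + dd T i := by
      intro i h1 h2
      have hg := hEgap n i h1 h2 le_rfl
      have hn' := hEmem n hn le_rfl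
      simp only [Finset.mem_Icc] at hn'
      have hdle := dd_le_add T h2
      omega
    set u : ℕ → ℕ := fun i => if 1 ≤ i ∧ i ≤ n then E i - dd T i else 0 with hu
    have hudef : ∀ i, 1 ≤ i → i ≤ n → u i = E i - dd T i := by
      intro i h1 h2; simp [hu, h1, h2]
    have hddE : ∀ i, 1 ≤ i → i ≤ n → dd T i < E i := by
      intro i h1 h2
      have := hE1 i h1 h2
      have := dd_le T i
      omega
    have huS : u ∈ S := by
      refine ⟨⟨⟨?_, ?_⟩, ?_⟩, ?_⟩
      · intro i hi
        simp only [Set.mem_Icc, not_and_or, not_le] at hi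
        simp only [hu]
        rw [if_neg]; omega
      · intro i hi
        obtain ⟨h1, h2⟩ := hi
        rw [Set.mem_Icc, hudef i h1 h2]
        have := hddE i h1 h2
        have := hEub i h1 h2
        constructor <;> omega
      · intro i hi j hj hij
        obtain ⟨h1, h2⟩ := hi
        obtain ⟨h3, h4⟩ := hj
        rw [hudef i h1 h2, hudef j h3 h4]
        have := hEgap j i h1 hij h4
        have := dd_le_add T hij
        have := hddE i h1 h2
        omega
      · intro i hiT
        have hi := hT hiT
        simp only [Finset.mem_Icc] at hi
        have h1 : 1 ≤ i := hi.1
        have h2 : i + 1 ≤ n := by omega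
        rw [hudef i h1 (by omega), hudef (i + 1) (by omega) h2]
        have hds := dd_succ T h1
        simp only [hiT, if_pos] at hds
        have := hEgap (i + 1) i h1 (by omega) h2
        have := hddE i h1 (by omega)
        omega
    refine ⟨u, huS, ?_⟩
    have himg : ∀ i, 1 ≤ i → i ≤ n → u i + dd T i = E i := by
      intro i h1 h2
      rw [hudef i h1 h2]
      have := hddE i h1 h2
      omega
    have hsub2 : f u ⊆ s := by
      intro x hx
      simp only [hf, Finset.mem_image, Finset.mem_Icc] at hx
      obtain ⟨i, ⟨hi1, hi2⟩, rfl⟩ := hx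
      rw [himg i hi1 hi2]
      simp only [hE]
      rw [dif_pos ⟨hi1, hi2⟩]
      exact s.orderEmbOfFin_mem hcard _
    have hcardfu : (f u).card = n := (Finset.mem_powersetCard.mp (hmemP u huS)).2
    exact Finset.eq_of_subset_of_card_le hsub2 (by omega)
  have himage : f '' S = ↑(Finset.powersetCard n (Finset.Icc 1 M)) := by
    apply Set.eq_of_subset_of_subset
    · rintro x ⟨u, hu, rfl⟩
      exact hmemP u hu
    · intro s hs
      obtain ⟨u, hu, hfu⟩ := hsurj s hs
      exact ⟨u, hu, hfu⟩
  have := Set.ncard_image_of_injOn hinj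
  rw [himage, Set.ncard_coe_finset, Finset.card_powersetCard, Nat.card_Icc] at this
  rw [← this]
  congr 1
  omega

/-- For a weakly increasing `u`, `Des(u) ⊆ D` is equivalent to strict increase on the
complement `T` of `D` in `{1,…,n−1}`. -/
lemma des_sub_iff (n : ℕ) (u : ℕ → ℕ) (D T : Finset ℕ)
    (hcompl : ∀ i ∈ Finset.Icc 1 (n - 1), (i ∈ T ↔ i ∉ D)) (hT : T ⊆ Finset.Icc 1 (n - 1)) :
    desSet n u ⊆ D ↔ ∀ i ∈ T, u i < u (i + 1) := by
  constructor
  · intro hsub i hiT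
    by_contra hlt
    have hiIcc := hT hiT
    have : i ∈ desSet n u := by
      simp only [desSet, Finset.mem_filter]
      exact ⟨hiIcc, by omega⟩
    exact ((hcompl i hiIcc).mp hiT) (hsub this)
  · intro hstrict i hi
    simp only [desSet, Finset.mem_filter] at hi
    obtain ⟨hiIcc, hle⟩ := hi
    by_contra hD
    have := hstrict i ((hcompl i hiIcc).mpr hD)
    omega

end Aux

/-- Proposition 7.5: the number of weakly increasing maps
`u : {1,…,n} → {1,…,m}` with `Des(u) ⊆ Des(v)` is `C(n+m−asc∘(v)−1, n)`, and
with `Des(u) ⊆ Des∘(v)` it is `C(n+m−asc(v)−1, n)`. -/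
theorem stmt16 (n : ℕ) (hn : 1 ≤ n) (v : ℕ → ℕ) (hv : IsCayley n v) (m : ℕ) :
    Set.ncard {u : ℕ → ℕ | u ∈ WIgen n m ∧ desSet n u ⊆ desSet n v}
      = (n + m - sasc n v - 1).choose n ∧
    Set.ncard {u : ℕ → ℕ | u ∈ WIgen n m ∧ desSet n u ⊆ sdesSet n v}
      = (n + m - asc n v - 1).choose n := by
  constructor
  · have hT : sascSet n v ⊆ Finset.Icc 1 (n - 1) := Finset.filter_subset _ _
    have hcompl : ∀ i ∈ Finset.Icc 1 (n - 1), (i ∈ sascSet n v ↔ i ∉ desSet n v) := by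
      intro i hi
      simp only [sascSet, desSet, Finset.mem_filter, hi, true_and, not_and, not_le]
    have heq : {u : ℕ → ℕ | u ∈ WIgen n m ∧ desSet n u ⊆ desSet n v}
        = {u : ℕ → ℕ | u ∈ WIgen n m ∧ ∀ i ∈ sascSet n v, u i < u (i + 1)} := by
      ext u
      simp only [Set.mem_setOf_eq, and_congr_right_iff]
      intro _
      exact des_sub_iff n u _ _ hcompl hT
    rw [heq, count_lemma n hn m _ hT, sasc]
  · have hT : ascSet n v ⊆ Finset.Icc 1 (n - 1) := Finset.filter_subset _ _
    have hcompl : ∀ i ∈ Finset.Icc 1 (n - 1), (i ∈ ascSet n v ↔ i ∉ sdesSet n v) := by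
      intro i hi
      simp only [ascSet, sdesSet, Finset.mem_filter, hi, true_and, not_and, not_lt]
    have heq : {u : ℕ → ℕ | u ∈ WIgen n m ∧ desSet n u ⊆ sdesSet n v}
        = {u : ℕ → ℕ | u ∈ WIgen n m ∧ ∀ i ∈ ascSet n v, u i < u (i + 1)} := by
      ext u
      simp only [Set.mem_setOf_eq, and_congr_right_iff]
      intro _
      exact des_sub_iff n u _ _ hcompl hT
    rw [heq, count_lemma n hn m _ hT, asc]


end CayPaper
end

section
/- Let n ≥ 1 and let S ⊆ {1,…,n−1}. Then the number of Cayley permutations v of length n with Asc∘(v) ⊆ S equals Σ_{w ∈ S_n, Asc(w) ⊆ S} 2^{des(w^{-1})}, and the number of Cayley permutations v of length n with Asc(v) ⊆ S equals Σ_{w ∈ S_n, Des(w) ⊆ S} 2^{des(w^{-1})}. -/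
namespace CayPaper

/-! ### Auxiliary development for `stmt19` -/

section Stmt19Aux

variable {n : ℕ}

lemma pw_val (σ : Equiv.Perm (Fin n)) {i : ℕ} (h1 : 1 ≤ i) (h2 : i ≤ n) :
    permWord n σ i = (σ ⟨i - 1, by omega⟩ : ℕ) + 1 := by
  simp [permWord, h1, h2]

lemma pw_mem (σ : Equiv.Perm (Fin n)) {i : ℕ} (h1 : 1 ≤ i) (h2 : i ≤ n) :
    1 ≤ permWord n σ i ∧ permWord n σ i ≤ n := by
  rw [pw_val σ h1 h2]
  have := (σ ⟨i - 1, by omega⟩).isLt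
  omega

lemma pw_inj (σ : Equiv.Perm (Fin n)) {i j : ℕ} (hi1 : 1 ≤ i) (hi2 : i ≤ n)
    (hj1 : 1 ≤ j) (hj2 : j ≤ n) (h : permWord n σ i = permWord n σ j) : i = j := by
  rw [pw_val σ hi1 hi2, pw_val σ hj1 hj2] at h
  have h2 : σ ⟨i - 1, by omega⟩ = σ ⟨j - 1, by omega⟩ := by
    apply Fin.ext; omega
  have := σ.injective h2
  have := Fin.mk.injEq (i-1) (by omega : i - 1 < n) (j-1) (by omega : j - 1 < n) ▸ this
  omega

lemma pw_inv (σ : Equiv.Perm (Fin n)) {i : ℕ} (h1 : 1 ≤ i) (h2 : i ≤ n) :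
    permWord n σ⁻¹ (permWord n σ i) = i := by
  obtain ⟨ha1, ha2⟩ := pw_mem σ h1 h2
  rw [pw_val σ h1 h2] at ha1 ha2 ⊢
  rw [pw_val σ⁻¹ (by omega) ha2]
  have key : ∀ (x : Fin n) (h : (x : ℕ) + 1 - 1 < n), (⟨(x : ℕ) + 1 - 1, h⟩ : Fin n) = x :=
    fun x h => Fin.ext (by simp)
  rw [key, Equiv.Perm.inv_def, Equiv.symm_apply_apply]
  simp only [Fin.val_mk]
  omega

lemma pw_inv' (σ : Equiv.Perm (Fin n)) {m : ℕ} (h1 : 1 ≤ m) (h2 : m ≤ n) :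
    permWord n σ (permWord n σ⁻¹ m) = m := by
  have := pw_inv σ⁻¹ h1 h2
  rwa [inv_inv] at this

/-- The basic bijection `(σ, F) ↦ v`. -/
def phiCay (n : ℕ) (σ : Equiv.Perm (Fin n)) (F : Finset ℕ) : ℕ → ℕ := fun i =>
  if 1 ≤ i ∧ i ≤ n then (F.filter (fun s => s < permWord n σ i)).card + 1 else 0

/-- Admissibility of a pair `(σ, F)`. -/
def GoodPair (n : ℕ) (σ : Equiv.Perm (Fin n)) (F : Finset ℕ) : Prop :=
  ascSet n (permWord n σ⁻¹) ⊆ F ∧ F ⊆ Finset.Icc 1 (n - 1)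

instance (n : ℕ) (σ : Equiv.Perm (Fin n)) (F : Finset ℕ) :
    Decidable (GoodPair n σ F) := by unfold GoodPair; infer_instance

lemma phiCay_val (σ : Equiv.Perm (Fin n)) (F : Finset ℕ) {i : ℕ} (h1 : 1 ≤ i) (h2 : i ≤ n) :
    phiCay n σ F i = (F.filter (fun s => s < permWord n σ i)).card + 1 := by
  simp [phiCay, h1, h2]

lemma strict_chain (w : ℕ → ℕ) (a : ℕ) :
    ∀ b : ℕ, a < b → (∀ t, a ≤ t → t < b → w (t + 1) < w t) → w b < w a := by
  intro b
  induction b with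
  | zero => omega
  | succ b ih =>
    intro hab hstep
    rcases Nat.lt_or_ge a b with h | h
    · have h1 := hstep b (by omega) (by omega)
      have h2 := ih h (fun t ht1 ht2 => hstep t ht1 (by omega))
      omega
    · have : a = b := by omega
      subst this
      exact hstep a le_rfl (by omega)

lemma nat_ivt (g : ℕ → ℕ) (hstep : ∀ m, g (m + 1) ≤ g m + 1) (a : ℕ) :
    ∀ b j, a ≤ b → g a ≤ j → j ≤ g b → ∃ m, a ≤ m ∧ m ≤ b ∧ g m = j := by
  intro b
  induction b with
  | zero =>
    intro j h1 h2 h3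
    have : a = 0 := by omega
    subst this
    exact ⟨0, le_rfl, le_rfl, by omega⟩
  | succ b ih =>
    intro j hab h2 h3
    rcases Nat.lt_or_ge a (b + 1) with h | h
    · rcases le_or_gt j (g b) with h4 | h4
      · obtain ⟨m, hm1, hm2, hm3⟩ := ih j (by omega) h2 h4
        exact ⟨m, hm1, by omega, hm3⟩
      · have := hstep b
        exact ⟨b + 1, by omega, le_rfl, by omega⟩
    · have : a = b + 1 := by omega
      subst this
      exact ⟨b + 1, le_rfl, le_rfl, by omega⟩

lemma gF_succ (F : Finset ℕ) (m : ℕ) :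
    (F.filter (fun s => s < m + 1)).card
      = (F.filter (fun s => s < m)).card + (if m ∈ F then 1 else 0) := by
  have h1 : F.filter (fun s => s < m + 1)
      = F.filter (fun s => s < m) ∪ F.filter (fun s => s = m) := by
    ext x
    simp only [Finset.mem_filter, Finset.mem_union]
    constructor
    · rintro ⟨hx, hlt⟩
      rcases Nat.lt_or_ge x m with h | h
      · exact Or.inl ⟨hx, h⟩
      · exact Or.inr ⟨hx, by omega⟩
    · rintro (⟨hx, h⟩ | ⟨hx, h⟩) <;> exact ⟨hx, by omega⟩
  rw [h1, Finset.card_union_of_disjoint, Finset.filter_eq']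
  · split <;> simp
  · rw [Finset.disjoint_left]
    intro x hx hx'
    simp only [Finset.mem_filter] at hx hx'
    omega

lemma gF_mono (F : Finset ℕ) {m m' : ℕ} (h : m ≤ m') :
    (F.filter (fun s => s < m)).card ≤ (F.filter (fun s => s < m')).card := by
  apply Finset.card_le_card
  intro x hx
  simp only [Finset.mem_filter] at hx ⊢
  exact ⟨hx.1, by omega⟩

lemma chain_concl {σ : Equiv.Perm (Fin n)} {F : Finset ℕ} (hg : GoodPair n σ F)
    {a b : ℕ} (ha : 1 ≤ a) (hb : b ≤ n) (hab : a < b)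
    (hnone : ∀ s ∈ F, ¬(a ≤ s ∧ s < b)) :
    permWord n σ⁻¹ b < permWord n σ⁻¹ a := by
  apply strict_chain (permWord n σ⁻¹) a b hab
  intro t ht1 ht2
  have htIcc : t ∈ Finset.Icc 1 (n - 1) := by
    rw [Finset.mem_Icc]; omega
  have htF : t ∉ F := fun hF => hnone t hF ⟨ht1, ht2⟩
  have htAsc : t ∉ ascSet n (permWord n σ⁻¹) := fun h => htF (hg.1 h)
  simp only [ascSet, Finset.mem_filter, htIcc, true_and, not_le] at htAsc
  exact htAsc

lemma exists_between {σ : Equiv.Perm (Fin n)} {F : Finset ℕ} (hg : GoodPair n σ F)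
    {i j : ℕ} (hi1 : 1 ≤ i) (hi2 : i ≤ n) (hj1 : 1 ≤ j) (hj2 : j ≤ n)
    (hij : permWord n σ i < permWord n σ j)
    (hnone : ∀ s ∈ F, ¬(permWord n σ i ≤ s ∧ s < permWord n σ j)) :
    j < i := by
  obtain ⟨ha1, ha2⟩ := pw_mem σ hi1 hi2
  obtain ⟨hb1, hb2⟩ := pw_mem σ hj1 hj2
  have := chain_concl hg ha1 hb2 hij hnone
  rwa [pw_inv σ hi1 hi2, pw_inv σ hj1 hj2] at this

/-- The key comparison: the order of `σ`-values is recoverable from `phiCay`. -/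
lemma pw_lt_iff {σ : Equiv.Perm (Fin n)} {F : Finset ℕ} (hg : GoodPair n σ F)
    {i j : ℕ} (hi1 : 1 ≤ i) (hi2 : i ≤ n) (hj1 : 1 ≤ j) (hj2 : j ≤ n) (hij : i ≠ j) :
    permWord n σ i < permWord n σ j
      ↔ (phiCay n σ F i < phiCay n σ F j ∨ (phiCay n σ F i = phiCay n σ F j ∧ j < i)) := by
  have key : ∀ i' j', 1 ≤ i' → i' ≤ n → 1 ≤ j' → j' ≤ n →
      permWord n σ i' < permWord n σ j' →
      (phiCay n σ F i' < phiCay n σ F j' ∨ (phiCay n σ F i' = phiCay n σ F j' ∧ j' < i')) := by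
    intro i' j' hi1 hi2 hj1 hj2 hlt
    rw [phiCay_val σ F hi1 hi2, phiCay_val σ F hj1 hj2]
    have hmono := gF_mono F (le_of_lt hlt)
    rcases Nat.lt_or_ge (F.filter (fun s => s < permWord n σ i')).card
        (F.filter (fun s => s < permWord n σ j')).card with h | h
    · exact Or.inl (by omega)
    · have heq : (F.filter (fun s => s < permWord n σ i')).card
          = (F.filter (fun s => s < permWord n σ j')).card := le_antisymm hmono h
      have hsub : F.filter (fun s => s < permWord n σ i')
          ⊆ F.filter (fun s => s < permWord n σ j') := by
        intro x hx
        simp only [Finset.mem_filter] at hx ⊢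
        exact ⟨hx.1, by omega⟩
      have hfeq := Finset.eq_of_subset_of_card_le hsub (le_of_eq heq.symm)
      have hnone : ∀ s ∈ F, ¬(permWord n σ i' ≤ s ∧ s < permWord n σ j') := by
        intro s hs ⟨hs1, hs2⟩
        have : s ∈ F.filter (fun t => t < permWord n σ j') := by
          simp only [Finset.mem_filter]; exact ⟨hs, hs2⟩
        rw [← hfeq] at this
        simp only [Finset.mem_filter] at this
        omega
      exact Or.inr ⟨by omega, exists_between hg hi1 hi2 hj1 hj2 hlt hnone⟩
  constructor
  · exact key i j hi1 hi2 hj1 hj2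
  · intro h
    have hne : permWord n σ i ≠ permWord n σ j :=
      fun he => hij (pw_inj σ hi1 hi2 hj1 hj2 he)
    rcases Nat.lt_or_ge (permWord n σ i) (permWord n σ j) with hlt | hge
    · exact hlt
    · have hlt' : permWord n σ j < permWord n σ i := by omega
      have := key j i hj1 hj2 hi1 hi2 hlt'
      rcases h with h | ⟨h1, h2⟩ <;> rcases this with h' | ⟨h1', h2'⟩ <;> omega

lemma sasc_phiCay {σ : Equiv.Perm (Fin n)} {F : Finset ℕ} (hg : GoodPair n σ F) :
    sascSet n (phiCay n σ F) = ascSet n (permWord n σ) := by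
  ext i
  simp only [sascSet, ascSet, Finset.mem_filter, Finset.mem_Icc, and_congr_right_iff]
  intro hi
  have hn2 : 2 ≤ n := by omega
  have hi1 : 1 ≤ i := hi.1
  have hi2 : i ≤ n := by omega
  have hi3 : i + 1 ≤ n := by omega
  have hiff := pw_lt_iff hg hi1 hi2 (by omega : 1 ≤ i + 1) hi3 (by omega)
  have hne : permWord n σ i ≠ permWord n σ (i + 1) :=
    fun he => by have := pw_inj σ hi1 hi2 (by omega) hi3 he; omega
  constructor
  · intro h
    have := hiff.2 (Or.inl h)
    omega
  · intro h
    have hlt : permWord n σ i < permWord n σ (i + 1) := by omega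
    rcases hiff.1 hlt with h' | ⟨h1, h2⟩
    · exact h'
    · omega

lemma des_phiCay {σ : Equiv.Perm (Fin n)} {F : Finset ℕ} (hg : GoodPair n σ F) :
    desSet n (phiCay n σ F) = desSet n (permWord n σ) := by
  ext i
  simp only [desSet, Finset.mem_filter, Finset.mem_Icc, and_congr_right_iff]
  intro hi
  have hi1 : 1 ≤ i := hi.1
  have hi2 : i ≤ n := by omega
  have hi3 : i + 1 ≤ n := by omega
  have hiff := pw_lt_iff hg hi1 hi2 (by omega : 1 ≤ i + 1) hi3 (by omega)
  have hne : permWord n σ i ≠ permWord n σ (i + 1) :=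
    fun he => by have := pw_inj σ hi1 hi2 (by omega) hi3 he; omega
  constructor
  · intro h
    by_contra hc
    have hlt : permWord n σ i < permWord n σ (i + 1) := by omega
    rcases hiff.1 hlt with h' | ⟨h1, h2⟩ <;> omega
  · intro h
    by_contra hc
    have : phiCay n σ F i < phiCay n σ F (i + 1) := by omega
    have := hiff.2 (Or.inl this)
    omega

lemma phiCay_word (σ : Equiv.Perm (Fin n)) (F : Finset ℕ) : IsWord n (phiCay n σ F) := by
  intro i hi
  simp only [Set.mem_Icc] at hi
  simp only [phiCay, ite_eq_right_iff]
  intro h; exact absurd h hi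

lemma phiCay_cayley (hn : 1 ≤ n) {σ : Equiv.Perm (Fin n)} {F : Finset ℕ}
    (hg : GoodPair n σ F) : IsCayley n (phiCay n σ F) := by
  refine ⟨phiCay_word σ F, F.card + 1, ?_⟩
  have hF1 : ∀ s ∈ F, 1 ≤ s ∧ s ≤ n - 1 := by
    intro s hs
    have := hg.2 hs
    rwa [Finset.mem_Icc] at this
  have hg1 : (F.filter (fun s => s < 1)).card = 0 := by
    rw [Finset.card_eq_zero, Finset.filter_eq_empty_iff]
    intro s hs
    have := hF1 s hs
    omega
  have hgn : (F.filter (fun s => s < n)).card = F.card := by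
    congr 1
    rw [Finset.filter_eq_self]
    intro s hs
    have := hF1 s hs
    omega
  ext j
  simp only [Set.mem_image, Set.mem_Icc]
  constructor
  · rintro ⟨i, ⟨hi1, hi2⟩, rfl⟩
    rw [phiCay_val σ F hi1 hi2]
    have : (F.filter (fun s => s < permWord n σ i)).card ≤ F.card :=
      Finset.card_le_card (Finset.filter_subset _ _)
    omega
  · rintro ⟨hj1, hj2⟩
    have hstep : ∀ m, (F.filter (fun s => s < m + 1)).card ≤ (F.filter (fun s => s < m)).card + 1 := by
      intro m
      rw [gF_succ]
      split <;> omega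
    obtain ⟨m, hm1, hm2, hm3⟩ := nat_ivt (fun m => (F.filter (fun s => s < m)).card) hstep 1 n (j - 1)
      hn (by show (F.filter (fun s => s < 1)).card ≤ j - 1; omega) (by show j - 1 ≤ (F.filter (fun s => s < n)).card; omega)
    refine ⟨permWord n σ⁻¹ m, ?_, ?_⟩
    · have := pw_mem σ⁻¹ hm1 hm2
      exact ⟨this.1, this.2⟩
    · obtain ⟨hi1, hi2⟩ := pw_mem σ⁻¹ hm1 hm2
      rw [phiCay_val σ F hi1 hi2, pw_inv' σ hm1 hm2, hm3]
      omega

lemma pw_rank {σ : Equiv.Perm (Fin n)} {F : Finset ℕ} (hg : GoodPair n σ F)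
    {i : ℕ} (hi1 : 1 ≤ i) (hi2 : i ≤ n) :
    permWord n σ i
      = ((Finset.Icc 1 n).filter fun j => j ≠ i ∧
          (phiCay n σ F j < phiCay n σ F i ∨
            (phiCay n σ F j = phiCay n σ F i ∧ i < j))).card + 1 := by
  have hfc : (Finset.Icc 1 n).filter (fun j => j ≠ i ∧
        (phiCay n σ F j < phiCay n σ F i ∨ (phiCay n σ F j = phiCay n σ F i ∧ i < j)))
      = (Finset.Icc 1 n).filter (fun j => j ≠ i ∧ permWord n σ j < permWord n σ i) := by
    apply Finset.filter_congr
    intro j hj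
    rw [Finset.mem_Icc] at hj
    constructor
    · rintro ⟨hne, hc⟩
      exact ⟨hne, (pw_lt_iff hg hj.1 hj.2 hi1 hi2 hne).2 hc⟩
    · rintro ⟨hne, hc⟩
      exact ⟨hne, (pw_lt_iff hg hj.1 hj.2 hi1 hi2 hne).1 hc⟩
  rw [hfc]
  obtain ⟨ha1, ha2⟩ := pw_mem σ hi1 hi2
  have hcard : ((Finset.Icc 1 n).filter (fun j => j ≠ i ∧ permWord n σ j < permWord n σ i)).card
      = (Finset.Icc 1 (permWord n σ i - 1)).card := by
    apply Finset.card_bij (fun j _ => permWord n σ j)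
    · intro j hj
      simp only [Finset.mem_filter, Finset.mem_Icc] at hj ⊢
      obtain ⟨⟨hj1, hj2⟩, _, hlt⟩ := hj
      have := pw_mem σ hj1 hj2
      omega
    · intro j1 hj1 j2 hj2 he
      simp only [Finset.mem_filter, Finset.mem_Icc] at hj1 hj2
      exact pw_inj σ hj1.1.1 hj1.1.2 hj2.1.1 hj2.1.2 he
    · intro m hm
      rw [Finset.mem_Icc] at hm
      have hm2 : m ≤ n := by omega
      have hm1 : 1 ≤ m := hm.1
      obtain ⟨hb1, hb2⟩ := pw_mem σ⁻¹ hm1 hm2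
      refine ⟨permWord n σ⁻¹ m, ?_, pw_inv' σ hm1 hm2⟩
      simp only [Finset.mem_filter, Finset.mem_Icc]
      refine ⟨⟨hb1, hb2⟩, ?_, ?_⟩
      · intro he
        have h2 := pw_inv' σ hm1 hm2
        rw [he] at h2
        omega
      · rw [pw_inv' σ hm1 hm2]
        omega
  rw [hcard, Nat.card_Icc]
  omega

lemma phiCay_inj {σ σ' : Equiv.Perm (Fin n)} {F F' : Finset ℕ}
    (hg : GoodPair n σ F) (hg' : GoodPair n σ' F')
    (h : phiCay n σ F = phiCay n σ' F') : σ = σ' ∧ F = F' := by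
  have hpw : ∀ i, 1 ≤ i → i ≤ n → permWord n σ i = permWord n σ' i := by
    intro i hi1 hi2
    rw [pw_rank hg hi1 hi2, pw_rank hg' hi1 hi2, h]
  have hσ : σ = σ' := by
    apply Equiv.ext
    intro x
    have hx : 1 ≤ (x : ℕ) + 1 := by omega
    have hx2 : (x : ℕ) + 1 ≤ n := by omega
    have := hpw ((x : ℕ) + 1) hx hx2
    rw [pw_val σ hx hx2, pw_val σ' hx hx2] at this
    simp only [Nat.add_sub_cancel, Fin.eta] at this
    apply Fin.ext
    omega
  subst hσ
  refine ⟨rfl, ?_⟩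
  ext t
  by_cases ht : t ∈ Finset.Icc 1 (n - 1)
  · rw [Finset.mem_Icc] at ht
    have hn2 : 2 ≤ n := by omega
    have ht1 : 1 ≤ t := ht.1
    have ht2 : t ≤ n := by omega
    have ht3 : t + 1 ≤ n := by omega
    have hval : ∀ (G : Finset ℕ), GoodPair n σ G → ∀ m, 1 ≤ m → m ≤ n →
        phiCay n σ G (permWord n σ⁻¹ m) = (G.filter (fun s => s < m)).card + 1 := by
      intro G hG m hm1 hm2
      obtain ⟨hb1, hb2⟩ := pw_mem σ⁻¹ hm1 hm2
      rw [phiCay_val σ G hb1 hb2, pw_inv' σ hm1 hm2]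
    have key : ∀ (G : Finset ℕ), GoodPair n σ G →
        (t ∈ G ↔ phiCay n σ G (permWord n σ⁻¹ t) < phiCay n σ G (permWord n σ⁻¹ (t + 1))) := by
      intro G hG
      rw [hval G hG t ht1 ht2, hval G hG (t + 1) (by omega) ht3]
      have := gF_succ G t
      constructor
      · intro htG
        rw [if_pos htG] at this
        omega
      · intro hlt
        by_contra htG
        rw [if_neg htG] at this
        omega
    rw [key F hg, key F' hg', h]
  · constructor
    · intro hF
      exact absurd (hg.2 hF) ht
    · intro hF
      exact absurd (hg'.2 hF) ht

lemma surj_aux (hn : 1 ≤ n) (σ : Equiv.Perm (Fin n)) (hfun v : ℕ → ℕ)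
    (hword : IsWord n v)
    (hv_eq : ∀ j, 1 ≤ j → j ≤ n → v j = hfun (permWord n σ j))
    (hmono : ∀ m m', 1 ≤ m → m ≤ m' → m' ≤ n → hfun m ≤ hfun m')
    (hf1 : hfun 1 = 1)
    (hfstep : ∀ m, 1 ≤ m → m + 1 ≤ n → hfun (m + 1) ≤ hfun m + 1)
    (hasc : ∀ t, t ∈ ascSet n (permWord n σ⁻¹) → hfun t < hfun (t + 1)) :
    ∃ F, GoodPair n σ F ∧ phiCay n σ F = v := by
  classical
  set F : Finset ℕ := (Finset.Icc 1 (n - 1)).filter (fun t => hfun t < hfun (t + 1)) with hF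
  have hFmem : ∀ t, t ∈ F ↔ (1 ≤ t ∧ t ≤ n - 1) ∧ hfun t < hfun (t + 1) := by
    intro t
    rw [hF, Finset.mem_filter, Finset.mem_Icc]
  have tele : ∀ r, 1 ≤ r → r ≤ n → (F.filter (fun s => s < r)).card + 1 = hfun r := by
    intro r
    induction r with
    | zero => omega
    | succ r ih =>
      intro h1 h2
      rcases Nat.eq_or_lt_of_le h1 with h | h
      · have hr0 : r = 0 := by omega
        subst hr0
        have hempty : F.filter (fun s => s < 1) = ∅ := by
          rw [Finset.filter_eq_empty_iff]
          intro x hx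
          have := (hFmem x).1 hx
          omega
        rw [hempty, hf1]
        simp
      · have hr1 : 1 ≤ r := by omega
        have hr2 : r ≤ n := by omega
        have hIH := ih hr1 hr2
        rw [gF_succ]
        have hrF : r ∈ F ↔ hfun r < hfun (r + 1) := by
          rw [hFmem]
          have : 1 ≤ r ∧ r ≤ n - 1 := by omega
          tauto
        have hmono' := hmono r (r + 1) hr1 (by omega) h2
        have hstep' := hfstep r hr1 h2
        by_cases hc : r ∈ F
        · rw [if_pos hc]
          have := hrF.1 hc
          omega
        · rw [if_neg hc]
          have : ¬ hfun r < hfun (r + 1) := fun hh => hc (hrF.2 hh)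
          omega
  refine ⟨F, ⟨?_, Finset.filter_subset _ _⟩, ?_⟩
  · intro t ht
    have ht' := ht
    simp only [ascSet, Finset.mem_filter, Finset.mem_Icc] at ht'
    rw [hFmem]
    exact ⟨ht'.1, hasc t ht⟩
  · funext i
    by_cases hi : 1 ≤ i ∧ i ≤ n
    · rw [phiCay_val σ F hi.1 hi.2]
      obtain ⟨hm1, hm2⟩ := pw_mem σ hi.1 hi.2
      rw [tele (permWord n σ i) hm1 hm2]
      exact (hv_eq i hi.1 hi.2).symm
    · simp only [phiCay, if_neg hi]
      refine (hword i ?_).symm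
      rw [Set.mem_Icc]
      exact fun hh => hi hh

lemma exists_sorting_perm {α : Type*} [LinearOrder α] (key : Fin n → α)
    (hinj : Function.Injective key) :
    ∃ σ : Equiv.Perm (Fin n), ∀ i j : Fin n, σ i < σ j ↔ key i < key j := by
  classical
  set s : Finset α := Finset.image key Finset.univ with hs
  have hcard : s.card = n := by
    rw [hs, Finset.card_image_of_injective _ hinj, Finset.card_univ, Fintype.card_fin]
  set e := s.orderIsoOfFin hcard with he
  set k' : Fin n ≃ {x // x ∈ s} := Equiv.ofBijective
      (fun i => ⟨key i, Finset.mem_image_of_mem _ (Finset.mem_univ i)⟩)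
      (by
        rw [Fintype.bijective_iff_injective_and_card]
        constructor
        · intro i j h
          exact hinj (Subtype.ext_iff.1 h)
        · simp [Fintype.card_coe, hcard]) with hk'
  refine ⟨k'.trans e.symm.toEquiv, ?_⟩
  intro i j
  have h0 : ∀ i : Fin n, e ((k'.trans e.symm.toEquiv) i) = k' i :=
    fun i => e.apply_symm_apply (k' i)
  rw [← e.lt_iff_lt, h0, h0]
  rw [← Subtype.coe_lt_coe]
  rfl

lemma phiCay_surj (hn : 1 ≤ n) {v : ℕ → ℕ} (hv : IsCayley n v) :
    ∃ σ F, GoodPair n σ F ∧ phiCay n σ F = v := by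
  classical
  obtain ⟨hword, k, him⟩ := hv
  have hvmem : ∀ j, 1 ≤ j → j ≤ n → 1 ≤ v j ∧ v j ≤ k := by
    intro j h1 h2
    have : v j ∈ v '' Set.Icc 1 n := Set.mem_image_of_mem v (by rw [Set.mem_Icc]; omega)
    rw [him, Set.mem_Icc] at this
    exact this
  have hvsurj : ∀ c, 1 ≤ c → c ≤ k → ∃ j, 1 ≤ j ∧ j ≤ n ∧ v j = c := by
    intro c h1 h2
    have : c ∈ v '' Set.Icc 1 n := by rw [him, Set.mem_Icc]; omega
    obtain ⟨j, hj, hjv⟩ := this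
    rw [Set.mem_Icc] at hj
    exact ⟨j, hj.1, hj.2, hjv⟩
  have hk1 : 1 ≤ k := by
    have := hvmem 1 le_rfl hn
    omega
  -- the sorting key
  set key : Fin n → Lex (ℕ × ℕ) := fun i => toLex (v ((i : ℕ) + 1), n - (i : ℕ)) with hkey
  have keyinj : Function.Injective key := by
    intro i j h
    have h2 := congrArg (fun x => (ofLex x).2) h
    simp only [hkey, ofLex_toLex] at h2
    have hi := i.isLt
    have hj := j.isLt
    apply Fin.ext
    omega
  obtain ⟨σ, hσ⟩ := exists_sorting_perm key keyinj
  -- the sorted value function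
  obtain ⟨hfun, hfun_val⟩ : ∃ f : ℕ → ℕ, ∀ (m : ℕ) (h : m - 1 < n),
      f m = (ofLex (key (σ⁻¹ ⟨m - 1, h⟩))).1 :=
    ⟨fun m => if hm : m - 1 < n then (ofLex (key (σ⁻¹ ⟨m - 1, hm⟩))).1 else 0,
     fun m h => dif_pos h⟩
  have hv_eq : ∀ j, 1 ≤ j → j ≤ n → v j = hfun (permWord n σ j) := by
    intro j hj1 hj2
    rw [pw_val σ hj1 hj2]
    rw [hfun_val _ (by simp only [Nat.add_sub_cancel]; exact (σ ⟨j - 1, by omega⟩).isLt)]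
    have hmk : (⟨(σ ⟨j - 1, by omega⟩ : ℕ) + 1 - 1,
        by simp only [Nat.add_sub_cancel]; exact (σ ⟨j - 1, by omega⟩).isLt⟩ : Fin n)
        = σ ⟨j - 1, by omega⟩ := by
      apply Fin.ext
      simp
    rw [hmk, Equiv.Perm.inv_def, Equiv.symm_apply_apply, hkey]
    simp only [ofLex_toLex]
    congr 1
    omega
  -- key comparison at consecutive ranks
  have hkeylt : ∀ m m' (hm : m < n) (hm' : m' < n), m < m' →
      (ofLex (key (σ⁻¹ ⟨m, hm⟩))).1 ≤ (ofLex (key (σ⁻¹ ⟨m', hm'⟩))).1 ∧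
      ((σ⁻¹ (⟨m, hm⟩ : Fin n) : ℕ) < (σ⁻¹ (⟨m', hm'⟩ : Fin n) : ℕ) →
        (ofLex (key (σ⁻¹ ⟨m, hm⟩))).1 < (ofLex (key (σ⁻¹ ⟨m', hm'⟩))).1) := by
    intro m m' hm hm' hmm
    set i : Fin n := σ⁻¹ ⟨m, hm⟩ with hi
    set j : Fin n := σ⁻¹ ⟨m', hm'⟩ with hj
    have hσij : σ i < σ j := by
      rw [hi, hj, Equiv.Perm.inv_def, Equiv.apply_symm_apply, Equiv.apply_symm_apply, Fin.lt_def]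
      exact hmm
    have hkij : key i < key j := (hσ i j).1 hσij
    rw [hkey] at hkij
    rcases Prod.Lex.lt_iff.1 hkij with hlt | ⟨heq, hlt⟩
    · constructor
      · exact le_of_lt (by simpa [hkey] using hlt)
      · intro _
        simpa [hkey] using hlt
    · have hi' := i.isLt
      have hj' := j.isLt
      constructor
      · exact le_of_eq (by simpa [hkey] using heq)
      · intro hij
        exfalso
        simp only [ofLex_toLex] at hlt
        omega
  have hmono : ∀ m m', 1 ≤ m → m ≤ m' → m' ≤ n → hfun m ≤ hfun m' := by
    intro m m' h1 h2 h3
    rcases Nat.eq_or_lt_of_le h2 with h | h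
    · subst h; exact le_rfl
    · have hp1 : m - 1 < n := by omega
      have hp2 : m' - 1 < n := by omega
      rw [hfun_val m hp1, hfun_val m' hp2]
      exact (hkeylt (m - 1) (m' - 1) hp1 hp2 (by omega)).1
  have hfrange : ∀ m, 1 ≤ m → m ≤ n → 1 ≤ hfun m ∧ hfun m ≤ k := by
    intro m h1 h2
    obtain ⟨hb1, hb2⟩ := pw_mem σ⁻¹ h1 h2
    have := hv_eq (permWord n σ⁻¹ m) hb1 hb2
    rw [pw_inv' σ h1 h2] at this
    rw [← this]
    exact hvmem _ hb1 hb2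
  have hfsurj : ∀ c, 1 ≤ c → c ≤ k → ∃ m, 1 ≤ m ∧ m ≤ n ∧ hfun m = c := by
    intro c h1 h2
    obtain ⟨j, hj1, hj2, hjv⟩ := hvsurj c h1 h2
    obtain ⟨hm1, hm2⟩ := pw_mem σ hj1 hj2
    exact ⟨permWord n σ j, hm1, hm2, by rw [← hv_eq j hj1 hj2]; exact hjv⟩
  have hf1 : hfun 1 = 1 := by
    obtain ⟨m, hm1, hm2, hm3⟩ := hfsurj 1 le_rfl hk1
    have h1 := hmono 1 m le_rfl hm1 hm2
    have h2 := (hfrange 1 le_rfl hn).1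
    omega
  have hfstep : ∀ m, 1 ≤ m → m + 1 ≤ n → hfun (m + 1) ≤ hfun m + 1 := by
    intro m h1 h2
    by_contra hc
    push_neg at hc
    have hik : hfun m + 1 ≤ k := by
      have := (hfrange (m + 1) (by omega) h2).2
      omega
    obtain ⟨m', hm1, hm2, hm3⟩ := hfsurj (hfun m + 1) (by omega) hik
    rcases le_or_gt m' m with h | h
    · have := hmono m' m hm1 h (by omega)
      omega
    · have := hmono (m + 1) m' (by omega) h hm2
      omega
  have hasc : ∀ t, t ∈ ascSet n (permWord n σ⁻¹) → hfun t < hfun (t + 1) := by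
    intro t ht
    simp only [ascSet, Finset.mem_filter, Finset.mem_Icc] at ht
    obtain ⟨⟨ht1, ht2⟩, hle⟩ := ht
    have hn2 : 2 ≤ n := by omega
    have htn : t < n := by omega
    have h1 := pw_val σ⁻¹ ht1 (by omega : t ≤ n)
    have h2 := pw_val σ⁻¹ (by omega : 1 ≤ t + 1) (by omega : t + 1 ≤ n)
    have hmk2 : (⟨t + 1 - 1, by omega⟩ : Fin n) = (⟨t, htn⟩ : Fin n) := by
      apply Fin.ext
      simp
    rw [hmk2] at h2
    have hlt : (σ⁻¹ (⟨t - 1, by omega⟩ : Fin n) : ℕ) < (σ⁻¹ (⟨t, htn⟩ : Fin n) : ℕ) := by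
      have hne : σ⁻¹ (⟨t - 1, by omega⟩ : Fin n) ≠ σ⁻¹ ⟨t, htn⟩ := by
        intro hh
        have h4 := σ⁻¹.injective hh
        have h5 : t - 1 = t := congrArg Fin.val h4
        omega
      have : (σ⁻¹ (⟨t - 1, by omega⟩ : Fin n) : ℕ) ≠ (σ⁻¹ (⟨t, htn⟩ : Fin n) : ℕ) :=
        fun hh => hne (Fin.ext hh)
      rw [h1, h2] at hle
      omega
    have hp1 : t - 1 < n := by omega
    have hp2 : t + 1 - 1 < n := by omega
    rw [hfun_val t hp1, hfun_val (t + 1) hp2]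
    have h8 : (⟨t + 1 - 1, hp2⟩ : Fin n) = ⟨t, htn⟩ := Fin.ext (by simp)
    rw [h8]
    exact (hkeylt (t - 1) t hp1 htn (by omega)).2 hlt
  exact ⟨σ, surj_aux hn σ hfun v hword hv_eq hmono hf1 hfstep hasc⟩

lemma card_interval_powerset {A B : Finset ℕ} (h : A ⊆ B) :
    (B.powerset.filter (fun F => A ⊆ F)).card = 2 ^ (B \ A).card := by
  classical
  rw [← Finset.card_powerset]
  apply Finset.card_bij' (fun F _ => F \ A) (fun E _ => E ∪ A)
  · intro F hF
    simp only [Finset.mem_filter, Finset.mem_powerset] at hF ⊢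
    exact Finset.sdiff_subset_sdiff hF.1 (Finset.Subset.refl A)
  · intro E hE
    simp only [Finset.mem_filter, Finset.mem_powerset] at hE ⊢
    constructor
    · exact Finset.union_subset (hE.trans Finset.sdiff_subset) h
    · exact Finset.subset_union_right
  · intro F hF
    simp only [Finset.mem_filter, Finset.mem_powerset] at hF
    ext x
    simp only [Finset.mem_union, Finset.mem_sdiff]
    constructor
    · rintro (⟨hx, _⟩ | hx)
      · exact hx
      · exact hF.2 hx
    · intro hx
      by_cases hxa : x ∈ A
      · exact Or.inr hxa
      · exact Or.inl ⟨hx, hxa⟩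
  · intro E hE
    simp only [Finset.mem_powerset] at hE
    ext x
    simp only [Finset.mem_sdiff, Finset.mem_union]
    constructor
    · rintro ⟨hx | hx, hxa⟩
      · exact hx
      · exact absurd hx hxa
    · intro hx
      have := hE hx
      rw [Finset.mem_sdiff] at this
      exact ⟨Or.inl hx, this.2⟩

lemma compl_asc (σ : Equiv.Perm (Fin n)) :
    Finset.Icc 1 (n - 1) \ ascSet n (permWord n σ) = desSet n (permWord n σ) := by
  ext i
  simp only [Finset.mem_sdiff, ascSet, desSet, Finset.mem_filter, Finset.mem_Icc, not_and]
  constructor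
  · rintro ⟨⟨h1, h2⟩, hn'⟩
    have : ¬ (permWord n σ i ≤ permWord n σ (i + 1)) := fun hh => hn' ⟨h1, h2⟩ hh
    exact ⟨⟨h1, h2⟩, by omega⟩
  · rintro ⟨⟨h1, h2⟩, hle⟩
    refine ⟨⟨h1, h2⟩, fun _ hh => ?_⟩
    have hne : permWord n σ i ≠ permWord n σ (i + 1) := fun he => by
      have := pw_inj σ (by omega : 1 ≤ i) (by omega : i ≤ n) (by omega : 1 ≤ i + 1)
        (by omega : i + 1 ≤ n) he
      omega
    omega

lemma main_count (hn : 1 ≤ n) (P : Equiv.Perm (Fin n) → Prop) [DecidablePred P] :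
    ((Finset.univ ×ˢ (Finset.Icc 1 (n - 1)).powerset).filter
        (fun p : Equiv.Perm (Fin n) × Finset ℕ => GoodPair n p.1 p.2 ∧ P p.1)).card
      = ∑ σ ∈ Finset.univ.filter P, 2 ^ des n (permWord n σ⁻¹) := by
  classical
  rw [Finset.card_filter, Finset.sum_product]
  have hinner : ∀ σ : Equiv.Perm (Fin n),
      (∑ F ∈ (Finset.Icc 1 (n - 1)).powerset,
        if GoodPair n σ F ∧ P σ then (1 : ℕ) else 0)
      = if P σ then 2 ^ des n (permWord n σ⁻¹) else 0 := by
    intro σ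
    by_cases hP : P σ
    · rw [if_pos hP]
      have hcong : ∀ F ∈ (Finset.Icc 1 (n - 1)).powerset,
          (if GoodPair n σ F ∧ P σ then (1 : ℕ) else 0)
            = if ascSet n (permWord n σ⁻¹) ⊆ F then 1 else 0 := by
        intro F hF
        rw [Finset.mem_powerset] at hF
        by_cases hA : ascSet n (permWord n σ⁻¹) ⊆ F
        · rw [if_pos ⟨⟨hA, hF⟩, hP⟩, if_pos hA]
        · rw [if_neg (fun hh => hA hh.1.1), if_neg hA]
      rw [Finset.sum_congr rfl hcong, ← Finset.card_filter,
        card_interval_powerset (show ascSet n (permWord n σ⁻¹) ⊆ Finset.Icc 1 (n - 1) from Finset.filter_subset _ _), compl_asc σ⁻¹]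
      rfl
    · rw [if_neg hP]
      apply Finset.sum_eq_zero
      intro F _
      rw [if_neg (fun hh => hP hh.2)]
  rw [Finset.sum_congr rfl (fun σ _ => hinner σ), ← Finset.sum_filter]

lemma part_count (hn : 1 ≤ n) (S : Finset ℕ) (Q : (ℕ → ℕ) → Finset ℕ)
    (R : Equiv.Perm (Fin n) → Finset ℕ) [DecidablePred fun σ => R σ ⊆ S]
    (hQR : ∀ σ F, GoodPair n σ F → Q (phiCay n σ F) = R σ) :
    {v : ℕ → ℕ | IsCayley n v ∧ Q v ⊆ S}.ncard
      = ∑ σ ∈ Finset.univ.filter (fun σ => R σ ⊆ S), 2 ^ des n (permWord n σ⁻¹) := by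
  classical
  set T := (Finset.univ ×ˢ (Finset.Icc 1 (n - 1)).powerset).filter
      (fun p : Equiv.Perm (Fin n) × Finset ℕ => GoodPair n p.1 p.2 ∧ R p.1 ⊆ S) with hT
  have hmemT : ∀ p : Equiv.Perm (Fin n) × Finset ℕ,
      p ∈ T ↔ GoodPair n p.1 p.2 ∧ R p.1 ⊆ S := by
    intro p
    rw [hT, Finset.mem_filter]
    constructor
    · exact fun h => h.2
    · intro h
      refine ⟨?_, h⟩
      rw [Finset.mem_product, Finset.mem_powerset]
      exact ⟨Finset.mem_univ _, h.1.2⟩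
  have hbij : Set.BijOn (fun p : Equiv.Perm (Fin n) × Finset ℕ => phiCay n p.1 p.2) ↑T
      {v : ℕ → ℕ | IsCayley n v ∧ Q v ⊆ S} := by
    refine ⟨?_, ?_, ?_⟩
    · intro p hp
      rw [Finset.mem_coe, hmemT] at hp
      refine ⟨phiCay_cayley hn hp.1, ?_⟩
      rw [hQR p.1 p.2 hp.1]
      exact hp.2
    · intro p hp q hq he
      rw [Finset.mem_coe, hmemT] at hp hq
      obtain ⟨h1, h2⟩ := phiCay_inj hp.1 hq.1 he
      exact Prod.ext h1 h2
    · intro v hv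
      obtain ⟨hvC, hvS⟩ := hv
      obtain ⟨σ, F, hg, heq⟩ := phiCay_surj hn hvC
      refine ⟨(σ, F), ?_, heq⟩
      rw [Finset.mem_coe, hmemT]
      refine ⟨hg, ?_⟩
      rw [← hQR σ F hg, heq]
      exact hvS
  rw [← hbij.image_eq, Set.ncard_image_of_injOn hbij.injOn, Set.ncard_coe_finset, hT]
  exact main_count hn (fun σ => R σ ⊆ S)

lemma wmax_eq (hn : 1 ≤ n) {v : ℕ → ℕ} {k : ℕ} (him : v '' Set.Icc 1 n = Set.Icc 1 k) :
    wmax n v = k := by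
  have hv1 : v 1 ∈ Set.Icc 1 k := by
    rw [← him]
    exact Set.mem_image_of_mem v (by rw [Set.mem_Icc]; omega)
  rw [Set.mem_Icc] at hv1
  apply le_antisymm
  · apply Finset.sup_le
    intro i hi
    rw [Finset.mem_Icc] at hi
    have : v i ∈ Set.Icc 1 k := by
      rw [← him]
      exact Set.mem_image_of_mem v (by rw [Set.mem_Icc]; omega)
    rw [Set.mem_Icc] at this
    exact this.2
  · have : k ∈ v '' Set.Icc 1 n := by rw [him, Set.mem_Icc]; omega
    obtain ⟨i, hi, hik⟩ := this
    rw [Set.mem_Icc] at hi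
    rw [← hik]
    exact Finset.le_sup (by rw [Finset.mem_Icc]; exact hi)

lemma wcomp_props (hn : 1 ≤ n) {v : ℕ → ℕ} {k : ℕ} (hword : IsWord n v)
    (him : v '' Set.Icc 1 n = Set.Icc 1 k) :
    IsCayley n (wcomp n v) ∧ wcomp n (wcomp n v) = v ∧
      ascSet n (wcomp n v) = desSet n v ∧ desSet n (wcomp n v) = ascSet n v := by
  have hmax : wmax n v = k := wmax_eq hn him
  have hvm : ∀ i, 1 ≤ i → i ≤ n → 1 ≤ v i ∧ v i ≤ k := by
    intro i h1 h2
    have : v i ∈ Set.Icc 1 k := by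
      rw [← him]
      exact Set.mem_image_of_mem v (by rw [Set.mem_Icc]; omega)
    rwa [Set.mem_Icc] at this
  have hk1 : 1 ≤ k := by
    have := hvm 1 le_rfl hn
    omega
  have hwc_val : ∀ i, 1 ≤ i → i ≤ n → wcomp n v i = k + 1 - v i := by
    intro i h1 h2
    simp [wcomp, h1, h2, hmax]
  have hword' : IsWord n (wcomp n v) := by
    intro i hi
    rw [Set.mem_Icc] at hi
    simp only [wcomp, ite_eq_right_iff]
    intro h
    exact absurd h hi
  have him' : wcomp n v '' Set.Icc 1 n = Set.Icc 1 k := by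
    ext j
    simp only [Set.mem_image, Set.mem_Icc]
    constructor
    · rintro ⟨i, ⟨h1, h2⟩, rfl⟩
      rw [hwc_val i h1 h2]
      have := hvm i h1 h2
      omega
    · rintro ⟨hj1, hj2⟩
      have : k + 1 - j ∈ v '' Set.Icc 1 n := by rw [him, Set.mem_Icc]; omega
      obtain ⟨i, hi, hik⟩ := this
      rw [Set.mem_Icc] at hi
      refine ⟨i, hi, ?_⟩
      rw [hwc_val i hi.1 hi.2, hik]
      omega
  have hmax' : wmax n (wcomp n v) = k := wmax_eq hn him'
  have hwc_val' : ∀ i, 1 ≤ i → i ≤ n → wcomp n (wcomp n v) i = k + 1 - wcomp n v i := by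
    intro i h1 h2
    simp [wcomp, h1, h2, hmax']
  refine ⟨⟨hword', k, him'⟩, ?_, ?_, ?_⟩
  · funext i
    by_cases hi : 1 ≤ i ∧ i ≤ n
    · rw [hwc_val' i hi.1 hi.2, hwc_val i hi.1 hi.2]
      have := hvm i hi.1 hi.2
      omega
    · have h0 : v i = 0 := hword i (by rw [Set.mem_Icc]; exact fun h => hi h)
      have h0' : wcomp n (wcomp n v) i = 0 := by
        show (if 1 ≤ i ∧ i ≤ n then wmax n (wcomp n v) + 1 - wcomp n v i else 0) = 0
        rw [if_neg hi]
      rw [h0', h0]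
  · ext i
    simp only [ascSet, desSet, Finset.mem_filter, Finset.mem_Icc, and_congr_right_iff]
    rintro ⟨h1, h2⟩
    have hb1 := hvm i h1 (by omega)
    have hb2 := hvm (i + 1) (by omega) (by omega)
    rw [hwc_val i h1 (by omega), hwc_val (i + 1) (by omega) (by omega)]
    omega
  · ext i
    simp only [ascSet, desSet, Finset.mem_filter, Finset.mem_Icc, and_congr_right_iff]
    rintro ⟨h1, h2⟩
    have hb1 := hvm i h1 (by omega)
    have hb2 := hvm (i + 1) (by omega) (by omega)
    rw [hwc_val i h1 (by omega), hwc_val (i + 1) (by omega) (by omega)]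
    omega

lemma ncard_asc_des (hn : 1 ≤ n) (S : Finset ℕ) :
    {v : ℕ → ℕ | IsCayley n v ∧ ascSet n v ⊆ S}.ncard
      = {v : ℕ → ℕ | IsCayley n v ∧ desSet n v ⊆ S}.ncard := by
  have hbij : Set.BijOn (wcomp n) {v : ℕ → ℕ | IsCayley n v ∧ desSet n v ⊆ S}
      {v : ℕ → ℕ | IsCayley n v ∧ ascSet n v ⊆ S} := by
    refine ⟨?_, ?_, ?_⟩
    · rintro v ⟨⟨hw, k, him⟩, hdes⟩
      obtain ⟨hC, _, hasc, _⟩ := wcomp_props hn hw him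
      exact ⟨hC, by rwa [hasc]⟩
    · rintro u ⟨⟨hw, k, him⟩, _⟩ u' ⟨⟨hw', k', him'⟩, _⟩ he
      obtain ⟨_, hinv, _, _⟩ := wcomp_props hn hw him
      obtain ⟨_, hinv', _, _⟩ := wcomp_props hn hw' him'
      rw [← hinv, ← hinv', he]
    · rintro u ⟨⟨hw, k, him⟩, hasc⟩
      obtain ⟨hC, hinv, _, hdes⟩ := wcomp_props hn hw him
      refine ⟨wcomp n u, ⟨hC, by rwa [hdes]⟩, hinv⟩
  rw [← hbij.image_eq, Set.ncard_image_of_injOn hbij.injOn]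

end Stmt19Aux
/-- The number of Cayley permutations with `Asc∘(v) ⊆ S` equals
`Σ_{w ∈ S_n, Asc(w) ⊆ S} 2^{des(w⁻¹)}`, and the number with `Asc(v) ⊆ S`
equals `Σ_{w ∈ S_n, Des(w) ⊆ S} 2^{des(w⁻¹)}`. -/
theorem stmt19 (n : ℕ) (hn : 1 ≤ n) (S : Finset ℕ)
    (hS : S ⊆ Finset.Icc 1 (n - 1)) :
    (Set.ncard {v : ℕ → ℕ | IsCayley n v ∧ sascSet n v ⊆ S}
      = ∑ σ ∈ Finset.univ.filter
            (fun σ : Equiv.Perm (Fin n) => ascSet n (permWord n σ) ⊆ S),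
          2 ^ des n (permWord n σ⁻¹)) ∧
    (Set.ncard {v : ℕ → ℕ | IsCayley n v ∧ ascSet n v ⊆ S}
      = ∑ σ ∈ Finset.univ.filter
            (fun σ : Equiv.Perm (Fin n) => desSet n (permWord n σ) ⊆ S),
          2 ^ des n (permWord n σ⁻¹)) := by
  constructor
  · exact part_count hn S (sascSet n) (fun σ => ascSet n (permWord n σ))
      (fun σ F hg => sasc_phiCay hg)
  · rw [ncard_asc_des hn S]
    exact part_count hn S (desSet n) (fun σ => desSet n (permWord n σ))
      (fun σ F hg => des_phiCay hg)

end CayPaper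
end
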